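/- The s-stage method given by A_opt with entries (A_opt)_{ii} = 1/(2s), (A_opt)_{ij} = 1/s for i > j, (A_opt)_{ij} = 0 for i < j, and b_opt = (1/s, ..., 1/s)^T, together with r = 2s, satisfies the second-order conditions b^T e = 1, b^T A e = 1/2 and all the absolute monotonicity conditions: I + rA invertible, (I+rA)^{-1}e ≥ 0, rA(I+rA)^{-1} ≥ 0, b^T(I+rA)^{-1} ≥ 0, 1 - r b^T(I+rA)^{-1}e ≥ 0. In particular the bound r = 2s is attained. -/

import Mathlib

open Matrix Finset

noncomputable def Mmat (s : ℕ) : Matrix (Fin s) (Fin s) ℝ :=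
  fun i j => if j ≤ i then 2 else 0

noncomputable def Nmat (s : ℕ) : Matrix (Fin s) (Fin s) ℝ :=
  fun i j => if i = j then 1/2 else if (j:ℕ)+1 = (i:ℕ) then -1/2 else 0

lemma Nsplit (s : ℕ) (k j : Fin s) :
    Nmat s k j = (if k = j then (1/2:ℝ) else 0) + (if (j:ℕ)+1 = (k:ℕ) then (-1/2:ℝ) else 0) := by
  unfold Nmat
  split_ifs <;> simp_all [Fin.ext_iff]

lemma sum_shift (s : ℕ) (f : Fin s → ℝ) (j : Fin s) :
    (∑ k : Fin s, if (j:ℕ)+1 = (k:ℕ) then f k else 0)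
      = if h : (j:ℕ)+1 < s then f ⟨(j:ℕ)+1, h⟩ else 0 := by
  split_ifs with h
  · rw [Finset.sum_eq_single (⟨(j:ℕ)+1, h⟩ : Fin s)]
    · simp
    · intro k _ hk
      rw [if_neg]
      intro he
      exact hk (Fin.ext he.symm)
    · simp
  · apply Finset.sum_eq_zero
    intro k _
    rw [if_neg]
    have := k.isLt
    omega

lemma sum_shift' (s : ℕ) (f : Fin s → ℝ) (m : Fin s) :
    (∑ k : Fin s, if (k:ℕ)+1 = (m:ℕ) then f k else 0)
      = if 0 < (m:ℕ) then f ⟨(m:ℕ)-1, by have := m.isLt; omega⟩ else 0 := by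
  split_ifs with h
  · rw [Finset.sum_eq_single (⟨(m:ℕ)-1, by have := m.isLt; omega⟩ : Fin s)]
    · rw [if_pos (show ((m:ℕ)-1)+1 = (m:ℕ) by omega)]
    · intro k _ hk
      rw [if_neg]
      intro he
      exact hk (Fin.ext (show (k:ℕ) = (m:ℕ)-1 by omega))
    · simp
  · apply Finset.sum_eq_zero
    intro k _
    rw [if_neg]
    omega

lemma MN (s : ℕ) : Mmat s * Nmat s = 1 := by
  ext i j
  rw [Matrix.mul_apply]
  have step : ∑ k, Mmat s i k * Nmat s k j
      = (∑ k : Fin s, if k = j then Mmat s i k * (1/2:ℝ) else 0)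
        + (∑ k : Fin s, if (j:ℕ)+1 = (k:ℕ) then Mmat s i k * (-1/2:ℝ) else 0) := by
    rw [← Finset.sum_add_distrib]
    apply Finset.sum_congr rfl
    intro k _
    rw [Nsplit, mul_add]
    congr 1 <;> split_ifs <;> ring
  rw [step, Finset.sum_ite_eq' Finset.univ j, if_pos (Finset.mem_univ j),
    sum_shift s (fun k => Mmat s i k * (-1/2:ℝ)) j]
  unfold Mmat
  have hj := j.isLt
  have hi := i.isLt
  rcases eq_or_ne i j with rfl | hne
  · rw [Matrix.one_apply_eq]
    split_ifs with h1 h2 h3 <;> rw [Fin.le_def] at * <;> (try simp only [Fin.val_mk] at *) <;>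
      first | ring1 | (exfalso; omega)
  · rw [Matrix.one_apply_ne hne]
    have hv : (i:ℕ) ≠ (j:ℕ) := fun h => hne (Fin.ext h)
    split_ifs with h1 h2 h3 <;> rw [Fin.le_def] at * <;> (try simp only [Fin.val_mk] at *) <;>
      first | ring1 | (exfalso; omega)

lemma NmulVec_one (s : ℕ) (i : Fin s) :
    (Nmat s).mulVec (fun _ => (1:ℝ)) i = if (i:ℕ) = 0 then 1/2 else 0 := by
  unfold Matrix.mulVec dotProduct
  have step : ∑ j, Nmat s i j * 1
      = (∑ j : Fin s, if i = j then (1/2:ℝ) else 0)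
        + (∑ j : Fin s, if (j:ℕ)+1 = (i:ℕ) then (-1/2:ℝ) else 0) := by
    rw [← Finset.sum_add_distrib]
    apply Finset.sum_congr rfl
    intro j _
    rw [mul_one, Nsplit]
  rw [step, Finset.sum_ite_eq Finset.univ i, if_pos (Finset.mem_univ i),
    sum_shift' s (fun _ => (-1/2:ℝ)) i]
  rcases Nat.eq_zero_or_pos (i:ℕ) with h | h
  · simp [h]
  · simp only [if_pos h, if_neg (Nat.pos_iff_ne_zero.mp h)]
    norm_num

lemma Ncolsum (s : ℕ) (i : Fin s) :
    (∑ j : Fin s, Nmat s j i) = 1/2 + (if (i:ℕ)+1 < s then (-1/2:ℝ) else 0) := by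
  have step : ∑ j : Fin s, Nmat s j i
      = (∑ j : Fin s, if j = i then (1/2:ℝ) else 0)
        + (∑ j : Fin s, if (i:ℕ)+1 = (j:ℕ) then (-1/2:ℝ) else 0) := by
    rw [← Finset.sum_add_distrib]
    apply Finset.sum_congr rfl
    intro j _
    rw [Nsplit]
  rw [step, Finset.sum_ite_eq' Finset.univ i, if_pos (Finset.mem_univ i),
    sum_shift s (fun _ => (-1/2:ℝ)) i]
  split_ifs <;> rfl

lemma sum_lt_const (s : ℕ) (i : Fin s) (c : ℝ) :
    (∑ j : Fin s, if j < i then c else 0) = (i:ℕ) * c := by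
  have h1 : (∑ j : Fin s, if j < i then c else 0)
      = ∑ j ∈ Finset.range s, (if j < (i:ℕ) then c else 0) := by
    rw [← Fin.sum_univ_eq_sum_range (fun m => if m < (i:ℕ) then c else 0) s]
    apply Finset.sum_congr rfl
    intro j _
    simp only [Fin.lt_def]
  rw [h1, ← Finset.sum_filter]
  have h2 : (Finset.range s).filter (· < (i:ℕ)) = Finset.range (i:ℕ) := by
    ext x
    simp only [Finset.mem_filter, Finset.mem_range]
    have := i.isLt
    omega
  rw [h2, Finset.sum_const, Finset.card_range, nsmul_eq_mul]

lemma gauss (s : ℕ) (hs : 0 < s) :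
    (∑ i : Fin s, ((i:ℕ):ℝ)) = (s:ℝ) * ((s:ℝ) - 1) / 2 := by
  have h0 := Finset.sum_range_id_mul_two s
  have h1 : (∑ i : Fin s, ((i:ℕ):ℝ)) = ((∑ i ∈ Finset.range s, i : ℕ) : ℝ) := by
    rw [Nat.cast_sum]
    exact Fin.sum_univ_eq_sum_range (fun m => ((m:ℕ):ℝ)) s
  have h2 : ((∑ i ∈ Finset.range s, i : ℕ) : ℝ) * 2 = (s:ℝ) * ((s:ℝ) - 1) := by
    rw [← Nat.cast_ofNat, ← Nat.cast_mul, h0]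
    push_cast [Nat.cast_sub hs]
    ring
  rw [h1]
  linarith

theorem stmt_18 (s : ℕ) (hs : 0 < s) :
    let Aopt : Matrix (Fin s) (Fin s) ℝ :=
      fun i j => if i = j then 1 / (2 * s) else if j < i then 1 / s else 0
    let bopt : Fin s → ℝ := fun _ => 1 / s
    let e : Fin s → ℝ := fun _ => 1
    let r : ℝ := 2 * s
    bopt ⬝ᵥ e = 1 ∧
    bopt ⬝ᵥ Aopt.mulVec e = 1 / 2 ∧
    IsUnit (1 + r • Aopt).det ∧
    (∀ i, 0 ≤ (1 + r • Aopt)⁻¹.mulVec e i) ∧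
    (∀ i j, 0 ≤ ((r • Aopt) * (1 + r • Aopt)⁻¹) i j) ∧
    (∀ i, 0 ≤ ((1 + r • Aopt)⁻¹ᵀ.mulVec bopt) i) ∧
    0 ≤ 1 - r * (bopt ⬝ᵥ (1 + r • Aopt)⁻¹.mulVec e) := by
  intro Aopt bopt e r
  have hs' : (s:ℝ) ≠ 0 := Nat.cast_ne_zero.mpr hs.ne'
  have hAdef : Aopt = fun i j => if i = j then 1 / (2 * (s:ℝ)) else if j < i then 1 / s else 0 := rfl
  have hb : bopt = fun _ => 1 / (s:ℝ) := rfl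
  have he : e = fun _ => (1:ℝ) := rfl
  have hr : r = 2 * (s:ℝ) := rfl
  have hM : (1 : Matrix (Fin s) (Fin s) ℝ) + r • Aopt = Mmat s := by
    ext i j
    show (1:Matrix (Fin s) (Fin s) ℝ) i j
        + (2*(s:ℝ)) * (if i = j then 1/(2*(s:ℝ)) else if j < i then 1/(s:ℝ) else 0)
      = if j ≤ i then 2 else 0
    rcases eq_or_ne i j with rfl | hne
    · rw [Matrix.one_apply_eq, if_pos rfl, if_pos le_rfl]
      field_simp
      norm_num
    · rw [Matrix.one_apply_ne hne, if_neg hne]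
      have hv : (i:ℕ) ≠ (j:ℕ) := fun h => hne (Fin.ext h)
      rcases lt_or_ge j i with hlt | hle
      · rw [if_pos hlt, if_pos hlt.le]
        field_simp
        norm_num
      · rw [if_neg (not_lt.mpr hle), if_neg (by rw [Fin.le_def] at *; omega)]
        ring
  have hinv : (1 + r • Aopt)⁻¹ = Nmat s := by
    rw [hM]
    exact Matrix.inv_eq_right_inv (MN s)
  refine ⟨?_, ?_, ?_, ?_, ?_, ?_, ?_⟩
  · show (∑ i : Fin s, (1/(s:ℝ)) * 1) = 1
    rw [Finset.sum_congr rfl (fun i _ => mul_one _), Finset.sum_const, Finset.card_univ,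
      Fintype.card_fin, nsmul_eq_mul]
    field_simp
  · -- second order condition
    have hrow : ∀ i : Fin s, Aopt.mulVec e i = 1/(2*(s:ℝ)) + (i:ℕ) * (1/(s:ℝ)) := by
      intro i
      unfold Matrix.mulVec dotProduct
      rw [he, hAdef]
      have step : (∑ j : Fin s, (if i = j then 1/(2*(s:ℝ)) else if j < i then 1/s else 0) * 1)
          = (∑ j : Fin s, if i = j then 1/(2*(s:ℝ)) else 0)
            + (∑ j : Fin s, if j < i then 1/(s:ℝ) else 0) := by
        rw [← Finset.sum_add_distrib]
        apply Finset.sum_congr rfl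
        intro j _
        rw [mul_one]
        rcases eq_or_ne i j with rfl | hne
        · rw [if_pos rfl, if_pos rfl, if_neg (lt_irrefl _)]
          ring
        · rw [if_neg hne, if_neg hne]
          ring
      rw [step, Finset.sum_ite_eq Finset.univ i, if_pos (Finset.mem_univ i),
        sum_lt_const s i]
    rw [hb]
    unfold dotProduct
    have : ∀ i : Fin s, (1/(s:ℝ)) * Aopt.mulVec e i
        = (1/(s:ℝ)) * (1/(2*(s:ℝ))) + ((i:ℕ):ℝ) * (1/((s:ℝ)*(s:ℝ))) := by
      intro i
      rw [hrow i]
      field_simp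
    simp only [this]
    rw [Finset.sum_add_distrib, Finset.sum_const, Finset.card_univ, Fintype.card_fin,
      ← Finset.sum_mul, gauss s hs]
    field_simp
    ring_nf
    rw [inv_pow, mul_inv_cancel₀ (pow_ne_zero 2 hs')]
    ring
  · rw [hM]
    exact Matrix.isUnit_det_of_right_inverse (MN s)
  · intro i
    rw [hinv, he, NmulVec_one]
    split_ifs <;> norm_num
  · intro i j
    have hR : r • Aopt = Mmat s - 1 := by rw [← hM, add_sub_cancel_left]
    have hprod : (r • Aopt) * (1 + r • Aopt)⁻¹ = 1 - Nmat s := by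
      rw [hinv, hR, sub_mul, one_mul, MN]
    rw [hprod, Matrix.sub_apply]
    rcases eq_or_ne i j with rfl | hne
    · rw [Matrix.one_apply_eq]
      unfold Nmat
      rw [if_pos rfl]
      norm_num
    · rw [Matrix.one_apply_ne hne]
      unfold Nmat
      rw [if_neg hne]
      split_ifs <;> norm_num
  · intro i
    rw [hinv, hb]
    unfold Matrix.mulVec dotProduct Matrix.transpose
    simp only [Matrix.of_apply]
    rw [show (∑ j : Fin s, Nmat s j i * (1/(s:ℝ))) = (∑ j : Fin s, Nmat s j i) * (1/(s:ℝ))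
      from (Finset.sum_mul _ _ _).symm, Ncolsum]
    split_ifs <;> positivity
  · rw [hinv, he, hb]
    unfold dotProduct
    have hsum : (∑ i : Fin s, (1/(s:ℝ)) * (Nmat s).mulVec (fun _ => (1:ℝ)) i)
        = (1/(s:ℝ)) * (1/2) := by
      rw [Finset.sum_eq_single (⟨0, hs⟩ : Fin s)]
      · rw [NmulVec_one, if_pos rfl]
      · intro k _ hk
        rw [NmulVec_one, if_neg (fun h => hk (Fin.ext h)), mul_zero]
      · simp
    rw [hsum, hr]
    have : 2 * (s:ℝ) * ((1/(s:ℝ)) * (1/2)) = 1 := by field_simp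
    linarith
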